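/- Let d ≥ 5 and let u ∈ H¹(ℝ^d); write x = (y, x_d) ∈ ℝ^{d−1} × ℝ. Then there is a constant C > 0 depending only on d such that ∫_ℝ ‖u(·, x_d)‖_{L²(ℝ^{d−1})}^{2d/(d−4)} dx_d ≤ C ‖∂_d u‖_{L²(ℝ^d)}^{4/(d−4)} ‖u‖_{L²(ℝ^d)}^{2(d−2)/(d−4)}, where ∂_d is the partial derivative in the last coordinate. -/

import Mathlib

open MeasureTheory Real

private lemma cs2 (a b c e : ℝ) :
    |a * c + b * e| ≤ Real.sqrt (a ^ 2 + b ^ 2) * Real.sqrt (c ^ 2 + e ^ 2) := by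
  have h1 : (a * c + b * e) ^ 2 ≤ (a ^ 2 + b ^ 2) * (c ^ 2 + e ^ 2) := by
    nlinarith [sq_nonneg (a * e - b * c)]
  calc |a * c + b * e| = Real.sqrt ((a * c + b * e) ^ 2) := (Real.sqrt_sq_eq_abs _).symm
    _ ≤ Real.sqrt ((a ^ 2 + b ^ 2) * (c ^ 2 + e ^ 2)) := Real.sqrt_le_sqrt h1
    _ = _ := Real.sqrt_mul (by positivity) _

private lemma norm_sq_complex (z : ℂ) : ‖z‖ ^ 2 = z.re ^ 2 + z.im ^ 2 := by
  rw [Complex.sq_norm, Complex.normSq_apply]; ring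

private lemma norm_complex_eq (z : ℂ) : ‖z‖ = Real.sqrt (z.re ^ 2 + z.im ^ 2) := by
  rw [Complex.norm_def, Complex.normSq_apply]
  congr 1; ring

/-- 1D trace-type estimate: an everywhere-differentiable `L²` function `g` on `ℝ`
with `‖g‖‖g'‖ ∈ L¹` satisfies `‖g(t)‖² ≤ 2 ∫ ‖g‖‖g'‖` for every `t`. -/
private lemma oneDim {g g' : ℝ → ℂ} (hg : ∀ s, HasDerivAt g (g' s) s)
    (hg'm : AEStronglyMeasurable g' volume)
    (h2 : Integrable (fun s => ‖g s‖ ^ 2) volume)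
    (hmix : Integrable (fun s => ‖g s‖ * ‖g' s‖) volume) (t : ℝ) :
    ‖g t‖ ^ 2 ≤ 2 * ∫ s, ‖g s‖ * ‖g' s‖ := by
  set h : ℝ → ℝ := fun s => (g s).re ^ 2 + (g s).im ^ 2 with hh_def
  set D : ℝ → ℝ := fun s => 2 * ((g s).re * (g' s).re + (g s).im * (g' s).im) with hD_def
  have hkey : ∀ s, ‖g s‖ ^ 2 = h s := fun s => norm_sq_complex _
  have hgc : Continuous g := by
    apply continuous_iff_continuousAt.2
    exact fun s => (hg s).continuousAt
  have hre : ∀ s, HasDerivAt (fun s => (g s).re) ((g' s).re) s := fun s =>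
    (Complex.reCLM.hasFDerivAt.comp_hasDerivAt s (hg s))
  have him : ∀ s, HasDerivAt (fun s => (g s).im) ((g' s).im) s := fun s =>
    (Complex.imCLM.hasFDerivAt.comp_hasDerivAt s (hg s))
  have hD : ∀ s, HasDerivAt h (D s) s := by
    intro s
    have h1 : HasDerivAt (fun s => (g s).re ^ 2 + (g s).im ^ 2)
        (((2 : ℕ) : ℝ) * (g s).re ^ (2 - 1) * (g' s).re + ((2 : ℕ) : ℝ) * (g s).im ^ (2 - 1) * (g' s).im) s :=
      ((hre s).fun_pow 2).add ((him s).fun_pow 2)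
    convert h1 using 1
    simp [hD_def]; ring
  have hDle : ∀ s, |D s| ≤ 2 * (‖g s‖ * ‖g' s‖) := by
    intro s
    have h1 := cs2 (g s).re (g s).im (g' s).re (g' s).im
    rw [norm_complex_eq (g s), norm_complex_eq (g' s)]
    calc |D s| = 2 * |(g s).re * (g' s).re + (g s).im * (g' s).im| := by
          rw [hD_def, abs_mul]; norm_num
      _ ≤ 2 * (Real.sqrt ((g s).re ^ 2 + (g s).im ^ 2) *
            Real.sqrt ((g' s).re ^ 2 + (g' s).im ^ 2)) := by
          exact mul_le_mul_of_nonneg_left h1 (by norm_num)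
  have hgm : AEStronglyMeasurable g volume := hgc.aestronglyMeasurable
  have hDm : AEStronglyMeasurable D volume := by
    apply AEStronglyMeasurable.const_mul
    exact ((Complex.continuous_re.comp_aestronglyMeasurable hgm).mul
      (Complex.continuous_re.comp_aestronglyMeasurable hg'm)).add
      ((Complex.continuous_im.comp_aestronglyMeasurable hgm).mul
      (Complex.continuous_im.comp_aestronglyMeasurable hg'm))
  have hDint : Integrable D volume :=
    (hmix.const_mul 2).mono' hDm (Filter.Eventually.of_forall fun s => by
      simpa [Real.norm_eq_abs] using hDle s)
  set I : ℝ := ∫ s, ‖g s‖ * ‖g' s‖ with hI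
  have hbound : ∀ a, a ≤ t → h t ≤ h a + 2 * I := by
    intro a hat
    have hftc : ∫ s in a..t, D s = h t - h a :=
      intervalIntegral.integral_eq_sub_of_hasDerivAt (fun s _ => hD s)
        hDint.intervalIntegrable
    have h1 : ∫ s in a..t, D s ≤ 2 * I := by
      calc ∫ s in a..t, D s ≤ |∫ s in a..t, D s| := le_abs_self _
        _ ≤ ∫ s in a..t, |D s| := intervalIntegral.abs_integral_le_integral_abs hat
        _ = ∫ s in Set.Ioc a t, |D s| := intervalIntegral.integral_of_le hat
        _ ≤ ∫ s, |D s| := setIntegral_le_integral hDint.abs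
            (Filter.Eventually.of_forall fun s => abs_nonneg _)
        _ ≤ ∫ s, 2 * (‖g s‖ * ‖g' s‖) := integral_mono hDint.abs (hmix.const_mul 2) hDle
        _ = 2 * I := by rw [hI, integral_const_mul]
    linarith
  have hinf : ∀ ε : ℝ, 0 < ε → ∃ a, a ≤ t ∧ h a < ε := by
    intro ε hε
    by_contra hcon
    push_neg at hcon
    have hconst : IntegrableOn (fun _ : ℝ => ε) (Set.Iic t) volume := by
      apply Integrable.mono' h2.integrableOn aestronglyMeasurable_const
      rw [ae_restrict_iff' measurableSet_Iic]
      refine Filter.Eventually.of_forall fun s hs => ?_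
      rw [Real.norm_eq_abs, abs_of_pos hε, hkey s]
      exact hcon s hs
    rcases integrable_const_iff.mp hconst with h0 | hfin
    · exact hε.ne' h0
    · rw [isFiniteMeasure_restrict, Real.volume_Iic] at hfin
      exact hfin rfl
  rw [hkey t]
  refine le_of_forall_pos_le_add fun ε hε => ?_
  obtain ⟨a, hat, ha⟩ := hinf ε hε
  have h1 := hbound a hat
  linarith

/-- For `d ≥ 5` there is `C = C(d) > 0` such that for every `u ∈ H¹(ℝ^d)`, writing
`x = (y, x_d)`,
`∫_ℝ ‖u(·,x_d)‖_{L²_y}^{2d/(d−4)} dx_d ≤ C ‖∂_d u‖₂^{4/(d−4)} ‖u‖₂^{2(d−2)/(d−4)}`. -/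
theorem slice_L2_interpolation_critical
    (d : ℕ) (hd : 5 ≤ d) :
    ∃ C : ℝ, 0 < C ∧
      ∀ u : EuclideanSpace ℝ (Fin (d - 1)) × ℝ → ℂ,
        Differentiable ℝ u →
        MemLp u 2 volume →
        (∀ i : Fin (d - 1),
            MemLp (fun x => fderiv ℝ u x (EuclideanSpace.single i 1, 0)) 2 volume) →
        MemLp (fun x => fderiv ℝ u x (0, 1)) 2 volume →
        (∫ t : ℝ,
            (Real.sqrt (∫ y : EuclideanSpace ℝ (Fin (d - 1)), ‖u (y, t)‖ ^ 2)) ^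
              (2 * (d : ℝ) / ((d : ℝ) - 4))) ≤
          C * (Real.sqrt (∫ x : EuclideanSpace ℝ (Fin (d - 1)) × ℝ,
                ‖fderiv ℝ u x (0, 1)‖ ^ 2)) ^ (4 / ((d : ℝ) - 4)) *
            (Real.sqrt (∫ x : EuclideanSpace ℝ (Fin (d - 1)) × ℝ, ‖u x‖ ^ 2)) ^
              (2 * ((d : ℝ) - 2) / ((d : ℝ) - 4)) := by
  have hd5 : (5 : ℝ) ≤ (d : ℝ) := by exact_mod_cast hd
  have hd4 : (0 : ℝ) < (d : ℝ) - 4 := by linarith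
  set q : ℝ := 4 / ((d : ℝ) - 4) with hq_def
  have hq0 : 0 ≤ q := div_nonneg (by norm_num) hd4.le
  refine ⟨(2 : ℝ) ^ q, Real.rpow_pos_of_pos (by norm_num) q, ?_⟩
  intro u hdiff hu _ hpd
  set du : EuclideanSpace ℝ (Fin (d - 1)) × ℝ → ℂ := fun x => fderiv ℝ u x (0, 1) with hdu_def
  set A : ℝ := ∫ x : EuclideanSpace ℝ (Fin (d - 1)) × ℝ, ‖u x‖ ^ 2 with hA_def
  set B : ℝ := ∫ x : EuclideanSpace ℝ (Fin (d - 1)) × ℝ, ‖du x‖ ^ 2 with hB_def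
  have hA0 : 0 ≤ A := integral_nonneg fun x => by positivity
  have hB0 : 0 ≤ B := integral_nonneg fun x => by positivity
  have hFint : Integrable (fun x : EuclideanSpace ℝ (Fin (d - 1)) × ℝ => ‖u x‖ ^ 2) volume := hu.norm.integrable_sq
  have hGint : Integrable (fun x : EuclideanSpace ℝ (Fin (d - 1)) × ℝ => ‖du x‖ ^ 2) volume := hpd.norm.integrable_sq
  have hψm : AEStronglyMeasurable (fun x : EuclideanSpace ℝ (Fin (d - 1)) × ℝ => ‖u x‖ * ‖du x‖) volume :=
    hu.aestronglyMeasurable.norm.mul hpd.aestronglyMeasurable.norm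
  have hsum : Integrable (fun x : EuclideanSpace ℝ (Fin (d - 1)) × ℝ =>
      (1 / 2 : ℝ) * (‖u x‖ ^ 2 + ‖du x‖ ^ 2)) volume := (hFint.add hGint).const_mul (1 / 2)
  have hψint : Integrable (fun x : EuclideanSpace ℝ (Fin (d - 1)) × ℝ => ‖u x‖ * ‖du x‖) volume := by
    apply Integrable.mono' hsum hψm
    refine Filter.Eventually.of_forall fun x => ?_
    rw [Real.norm_eq_abs, abs_of_nonneg (by positivity)]
    nlinarith [sq_nonneg (‖u x‖ - ‖du x‖)]
  -- Cauchy–Schwarz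
  have hCS : ∫ x : EuclideanSpace ℝ (Fin (d - 1)) × ℝ, ‖u x‖ * ‖du x‖ ≤ Real.sqrt A * Real.sqrt B := by
    have hconj : Real.HolderConjugate 2 2 := Real.HolderConjugate.two_two
    have h2e : ENNReal.ofReal (2 : ℝ) = 2 := by
      rw [ENNReal.ofReal_ofNat]
    have hu2 : MemLp (fun x : EuclideanSpace ℝ (Fin (d - 1)) × ℝ => ‖u x‖)
        (ENNReal.ofReal 2) volume := by rw [h2e]; exact hu.norm
    have hpd2 : MemLp (fun x : EuclideanSpace ℝ (Fin (d - 1)) × ℝ => ‖du x‖)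
        (ENNReal.ofReal 2) volume := by rw [h2e]; exact hpd.norm
    have hh := integral_mul_le_Lp_mul_Lq_of_nonneg (μ := volume) hconj
      (Filter.Eventually.of_forall fun x : EuclideanSpace ℝ (Fin (d - 1)) × ℝ => norm_nonneg (u x))
      (Filter.Eventually.of_forall fun x : EuclideanSpace ℝ (Fin (d - 1)) × ℝ => norm_nonneg (du x))
      hu2 hpd2
    have e1 : ∀ r : ℝ, r ^ (2 : ℝ) = r ^ 2 := fun r => by
      rw [show (2 : ℝ) = ((2 : ℕ) : ℝ) by norm_num, Real.rpow_natCast]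
    simp only [e1, ← Real.sqrt_eq_rpow] at hh
    exact hh
  -- Fubini setup
  have hvol : (volume : Measure (EuclideanSpace ℝ (Fin (d - 1)) × ℝ)) = (volume : Measure (EuclideanSpace ℝ (Fin (d - 1)))).prod volume :=
    Measure.volume_eq_prod (EuclideanSpace ℝ (Fin (d - 1))) ℝ
  have hFprod : Integrable (fun x : EuclideanSpace ℝ (Fin (d - 1)) × ℝ => ‖u x‖ ^ 2)
      ((volume : Measure (EuclideanSpace ℝ (Fin (d - 1)))).prod volume) := hvol ▸ hFint
  have hψprod : Integrable (fun x : EuclideanSpace ℝ (Fin (d - 1)) × ℝ => ‖u x‖ * ‖du x‖)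
      ((volume : Measure (EuclideanSpace ℝ (Fin (d - 1)))).prod volume) := hvol ▸ hψint
  -- slice derivative
  have hslicederiv : ∀ (y : EuclideanSpace ℝ (Fin (d - 1))) (s : ℝ),
      HasDerivAt (fun s => u (y, s)) (du (y, s)) s := by
    intro y s
    have h1 : HasDerivAt (fun s : ℝ => ((y, s) : EuclideanSpace ℝ (Fin (d - 1)) × ℝ)) ((0 : EuclideanSpace ℝ (Fin (d - 1))), (1 : ℝ)) s :=
      (hasDerivAt_const s y).prodMk (hasDerivAt_id s)
    have h2 := (hdiff (y, s)).hasFDerivAt.comp_hasDerivAt s h1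
    simpa [Function.comp_def, hdu_def] using h2
  -- slice measurability of du
  have hduslice : ∀ y : EuclideanSpace ℝ (Fin (d - 1)), AEStronglyMeasurable (fun s => du (y, s)) volume := by
    intro y
    exact (((measurable_fderiv_apply_const ℝ u ((0 : EuclideanSpace ℝ (Fin (d - 1))), (1 : ℝ)))).comp
      measurable_prodMk_left).aestronglyMeasurable
  -- a.e. slice bound
  have hslice : ∀ᵐ y : EuclideanSpace ℝ (Fin (d - 1)), ∀ t : ℝ,
      ‖u (y, t)‖ ^ 2 ≤ 2 * ∫ s, ‖u (y, s)‖ * ‖du (y, s)‖ := by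
    filter_upwards [hFprod.prod_right_ae, hψprod.prod_right_ae] with y h1 h2
    intro t
    exact oneDim (hslicederiv y) (hduslice y) h1 h2 t
  set f : ℝ → ℝ := fun t => ∫ y : EuclideanSpace ℝ (Fin (d - 1)), ‖u (y, t)‖ ^ 2 with hf_def
  have hf0 : ∀ t, 0 ≤ f t := fun t => integral_nonneg fun y => by positivity
  have hfint : Integrable f volume := hFprod.integral_prod_right
  set M : ℝ := 2 * (Real.sqrt A * Real.sqrt B) with hM_def
  have hM0 : 0 ≤ M := by positivity
  have hfM : ∀ t, f t ≤ M := by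
    intro t
    have h1 : f t ≤ ∫ y : EuclideanSpace ℝ (Fin (d - 1)), 2 * ∫ s, ‖u (y, s)‖ * ‖du (y, s)‖ := by
      apply integral_mono_of_nonneg
        (Filter.Eventually.of_forall fun y => by positivity)
        ((hψprod.integral_prod_left).const_mul 2)
      filter_upwards [hslice] with y hy using hy t
    have h2 : ∫ y : EuclideanSpace ℝ (Fin (d - 1)), 2 * ∫ s, ‖u (y, s)‖ * ‖du (y, s)‖
        = 2 * ∫ x : EuclideanSpace ℝ (Fin (d - 1)) × ℝ, ‖u x‖ * ‖du x‖ := by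
      rw [integral_const_mul, hvol, integral_prod _ hψprod]
    calc f t ≤ ∫ y : EuclideanSpace ℝ (Fin (d - 1)), 2 * ∫ s, ‖u (y, s)‖ * ‖du (y, s)‖ := h1
      _ = 2 * ∫ x : EuclideanSpace ℝ (Fin (d - 1)) × ℝ, ‖u x‖ * ‖du x‖ := h2
      _ ≤ 2 * (Real.sqrt A * Real.sqrt B) := by linarith [hCS]
  -- ∫ f = A
  have hfA : ∫ t, f t = A := by
    have h1 := integral_integral_swap (f := fun (y : EuclideanSpace ℝ (Fin (d - 1))) (t : ℝ) => ‖u (y, t)‖ ^ 2)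
      (μ := (volume : Measure (EuclideanSpace ℝ (Fin (d - 1))))) (ν := (volume : Measure ℝ)) hFprod
    rw [hA_def, hvol, integral_prod _ hFprod]
    exact h1.symm
  -- pointwise power bound
  have hexp : (1 / 2 : ℝ) * (2 * (d : ℝ) / ((d : ℝ) - 4)) = q + 1 := by
    rw [hq_def]; field_simp; ring
  have hpt : ∀ t : ℝ, Real.sqrt (f t) ^ (2 * (d : ℝ) / ((d : ℝ) - 4)) ≤ M ^ q * f t := by
    intro t
    rw [Real.sqrt_eq_rpow, ← Real.rpow_mul (hf0 t), hexp]
    rcases eq_or_lt_of_le (hf0 t) with h0 | h0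
    · rw [← h0, Real.zero_rpow (by intro hc; nlinarith), mul_zero]
    · rw [Real.rpow_add h0, Real.rpow_one]
      exact mul_le_mul_of_nonneg_right
        (Real.rpow_le_rpow (hf0 t) (hfM t) hq0) (hf0 t)
  have hint_le : (∫ t, Real.sqrt (f t) ^ (2 * (d : ℝ) / ((d : ℝ) - 4)))
      ≤ M ^ q * A := by
    have h1 : (∫ t, Real.sqrt (f t) ^ (2 * (d : ℝ) / ((d : ℝ) - 4)))
        ≤ ∫ t, M ^ q * f t := by
      apply integral_mono_of_nonneg
        (Filter.Eventually.of_forall fun t => Real.rpow_nonneg (Real.sqrt_nonneg _) _)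
        (hfint.const_mul _)
        (Filter.Eventually.of_forall hpt)
    rwa [integral_const_mul, hfA] at h1
  -- final algebra
  have hfinal : M ^ q * A = (2 : ℝ) ^ q * Real.sqrt B ^ q *
      Real.sqrt A ^ (2 * ((d : ℝ) - 2) / ((d : ℝ) - 4)) := by
    have hA2 : A = Real.sqrt A ^ (2 : ℝ) := by
      rw [show (2 : ℝ) = ((2 : ℕ) : ℝ) by norm_num, Real.rpow_natCast, Real.sq_sqrt hA0]
    have hq2 : q + 2 = 2 * ((d : ℝ) - 2) / ((d : ℝ) - 4) := by
      rw [hq_def]; field_simp; ring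
    rw [hM_def, Real.mul_rpow (by norm_num) (by positivity),
      Real.mul_rpow (Real.sqrt_nonneg _) (Real.sqrt_nonneg _)]
    calc (2 : ℝ) ^ q * (Real.sqrt A ^ q * Real.sqrt B ^ q) * A
        = (2 : ℝ) ^ q * Real.sqrt B ^ q * (Real.sqrt A ^ q * Real.sqrt A ^ (2 : ℝ)) := by
          rw [← hA2]; ring
      _ = (2 : ℝ) ^ q * Real.sqrt B ^ q * Real.sqrt A ^ (q + 2) := by
          rw [← Real.rpow_add' (Real.sqrt_nonneg _) (by intro hc; nlinarith)]
      _ = _ := by rw [hq2]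
  show (∫ t, Real.sqrt (f t) ^ (2 * (d : ℝ) / ((d : ℝ) - 4))) ≤
      (2 : ℝ) ^ q * Real.sqrt B ^ q *
        Real.sqrt A ^ (2 * ((d : ℝ) - 2) / ((d : ℝ) - 4))
  calc (∫ t, Real.sqrt (f t) ^ (2 * (d : ℝ) / ((d : ℝ) - 4))) ≤ M ^ q * A := hint_le
    _ = (2 : ℝ) ^ q * Real.sqrt B ^ q *
        Real.sqrt A ^ (2 * ((d : ℝ) - 2) / ((d : ℝ) - 4)) := hfinal
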